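/- Solution of the coefficient recursion u^{(k+1)}_l = u^{(k)}_l + (2k−l+1+(m+1)b) u^{(k)}_{l−1} with u^{(0)}_0 = 1, u^{(k)}_l = 0 for l < 0 or l > k: the unique solution is u^{(k)}_l = C(k,l) · (k−1+(m+1)b)(k−2+(m+1)b)⋯(k−l+(m+1)b), where C(k,l) is the binomial coefficient and the product has l factors (empty product = 1 for l = 0). -/

import Mathlib

/-- Solution of the coefficient recursion
`u^{(k+1)}_l = u^{(k)}_l + (2k−l+1+(m+1)b) u^{(k)}_{l−1}` with `u^{(0)}_0 = 1` and
`u^{(k)}_l = 0` for `l < 0` or `l > k`: the unique solution is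
`u^{(k)}_l = C(k,l) (k−1+(m+1)b)(k−2+(m+1)b)⋯(k−l+(m+1)b)` (a product of `l` factors). -/
theorem coefficient_recursion_solution (b : ℝ) (m : ℕ) (hm : 0 < m)
    (u : ℕ → ℤ → ℝ)
    (h0 : u 0 0 = 1)
    (hbd : ∀ (k : ℕ) (l : ℤ), (l < 0 ∨ (k : ℤ) < l) → u k l = 0)
    (hrec : ∀ (k : ℕ) (l : ℤ),
      u (k + 1) l = u k l + (2 * (k : ℝ) - (l : ℝ) + 1 + ((m : ℝ) + 1) * b) * u k (l - 1)) :
    ∀ (k l : ℕ), l ≤ k →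
      u k l = (k.choose l : ℝ) *
        ∏ j ∈ Finset.range l, ((k : ℝ) - ((j : ℝ) + 1) + ((m : ℝ) + 1) * b) := by
  set c : ℝ := ((m : ℝ) + 1) * b with hc
  have key : ∀ k l : ℕ,
      u k l = (k.choose l : ℝ) *
        ∏ j ∈ Finset.range l, ((k : ℝ) - ((j : ℝ) + 1) + c) := by
    intro k
    induction k with
    | zero =>
      intro l
      cases l with
      | zero => simpa using h0
      | succ s =>
        rw [hbd 0 _ (Or.inr (by exact_mod_cast Nat.succ_pos s))]
        simp [Nat.choose_eq_zero_of_lt (Nat.succ_pos s)]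
    | succ k ih =>
      intro l
      cases l with
      | zero =>
        have h1 := hrec k 0
        have h2 : u k (0 - 1) = 0 := hbd k _ (Or.inl (by norm_num))
        have h3 := ih 0
        rw [h2] at h1
        simp at h3 h1 ⊢
        rw [h1, h3]
      | succ s =>
        have h1 := hrec k ((s : ℤ) + 1)
        have hs : ((s : ℤ) + 1 - 1) = (s : ℤ) := by ring
        rw [hs] at h1
        have e1 := ih (s + 1)
        have e2 := ih s
        push_cast at e1 ⊢
        rw [h1, e1, e2]
        -- product manipulations
        have hL : ∏ j ∈ Finset.range (s + 1), ((k : ℝ) + 1 - ((j : ℝ) + 1) + c)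
            = (∏ j ∈ Finset.range s, ((k : ℝ) - ((j : ℝ) + 1) + c)) * ((k : ℝ) + c) := by
          have : ∀ j ∈ Finset.range (s + 1),
              ((k : ℝ) + 1 - ((j : ℝ) + 1) + c) = ((k : ℝ) - (j : ℝ) + c) := by
            intro j _; ring
          rw [Finset.prod_congr rfl this, Finset.prod_range_succ']
          push_cast
          ring_nf
          simp only [sub_add_eq_add_sub]
        have hR : ∏ j ∈ Finset.range (s + 1), ((k : ℝ) - ((j : ℝ) + 1) + c)
            = (∏ j ∈ Finset.range s, ((k : ℝ) - ((j : ℝ) + 1) + c)) * ((k : ℝ) - ((s : ℝ) + 1) + c) := by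
          rw [Finset.prod_range_succ]
        rw [hL, hR]
        set Q : ℝ := ∏ j ∈ Finset.range s, ((k : ℝ) - ((j : ℝ) + 1) + c) with hQ
        have hC1 : (((k + 1).choose (s + 1) : ℕ) : ℝ) = (k.choose s : ℝ) + (k.choose (s + 1) : ℝ) := by
          exact_mod_cast congrArg (Nat.cast : ℕ → ℝ) (Nat.choose_succ_succ k s)
        have hch : ((k.choose (s + 1) : ℕ) : ℝ) * ((s : ℝ) + 1)
            = (k.choose s : ℝ) * ((k : ℝ) - (s : ℝ)) := by
          rcases le_or_gt (s + 1) k with h | h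
          · have h' := Nat.choose_succ_right_eq k s
            have hsk : s ≤ k := by omega
            have h'' : ((k.choose (s + 1)) : ℝ) * ((s : ℝ) + 1)
                = ((k.choose s) : ℝ) * (((k - s : ℕ)) : ℝ) := by exact_mod_cast h'
            rw [Nat.cast_sub hsk] at h''
            linarith [h'']
          · have h1 : k.choose (s + 1) = 0 := Nat.choose_eq_zero_of_lt (by omega)
            rcases eq_or_lt_of_le (Nat.lt_succ_iff.mp h) with he | hl
            · subst he; simp [h1]
            · have h2 : k.choose s = 0 := Nat.choose_eq_zero_of_lt hl
              simp [h1, h2]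
        push_cast at hC1 hch ⊢
        linear_combination -(Q * ((k : ℝ) + c) * hC1 + Q * hch)
  intro k l _
  exact key k l
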